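/- arXiv:2011.05882 — 2 statements merged into one kernel-verified Lean document; each statement's English description precedes it below -/
import Mathlib

section
/- Let M = Γ(ℤ ×ₗ G,(1,0)) be the perfect MV-algebra, where G is a Dedekind σ-complete abelian lattice-ordered group, let x₁,…,xₙ be one-dimensional observables on M, and let x be their n-dimensional meet joint observable, i.e. the unique n-dimensional observable with x((−∞,s₁) × ⋯ × (−∞,sₙ)) = x₁((−∞,s₁)) ⊓ ⋯ ⊓ xₙ((−∞,sₙ)) for all s̄ ∈ ℝⁿ. Then: (1) x(πᵢ⁻¹(A)) = xᵢ(A) for every Borel set A ⊆ ℝ and every i = 1,…,n, where πᵢ : ℝⁿ → ℝ is the i-th coordinate projection; (2) x(A₁ × ⋯ × Aₙ) ≤ x₁(A₁) ⊓ ⋯ ⊓ xₙ(Aₙ) for all Borel sets A₁,…,Aₙ ⊆ ℝ. Moreover, the inequality in (2) can be strict: for G = ℝ there exist one-dimensional observables x, y on Γ(ℤ ×ₗ ℝ,(1,0)) with x({2}) = (0,3), x({3}) = (1,−3), y({1}) = (0,4), y({5}) = (1,−4), for which the two-dimensional meet joint observable z satisfies z(A × B) < x(A) ⊓ y(B) for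 some Borel A, B. -/
open Classical

namespace Paper

/-- A po-group is directed. -/
def DirectedPO (G : Type*) [AddCommGroup G] [PartialOrder G] : Prop :=
  ∀ a b : G, ∃ c, a ≤ c ∧ b ≤ c

/-- The Riesz interpolation property for a po-group `G`. -/
def RieszInterp (G : Type*) [AddCommGroup G] [PartialOrder G] : Prop :=
  ∀ a₁ a₂ b₁ b₂ : G, a₁ ≤ b₁ → a₁ ≤ b₂ → a₂ ≤ b₁ → a₂ ≤ b₂ →
    ∃ c, (a₁ ≤ c ∧ a₂ ≤ c) ∧ (c ≤ b₁ ∧ c ≤ b₂)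

/-- Dedekind monotone σ-completeness of a po-group: every ascending sequence bounded above
has a supremum and every descending sequence bounded below has an infimum. -/
def MonSigmaComplete (G : Type*) [AddCommGroup G] [PartialOrder G] : Prop :=
  (∀ f : ℕ → G, Monotone f → BddAbove (Set.range f) → ∃ s, IsLUB (Set.range f) s) ∧
  (∀ f : ℕ → G, Antitone f → BddBelow (Set.range f) → ∃ s, IsGLB (Set.range f) s)

/-- Dedekind σ-completeness: every nonempty countable subset bounded above has a supremum. -/
def DedekindSC (G : Type*) [AddCommGroup G] [PartialOrder G] : Prop :=
  ∀ S : Set G, S.Nonempty → S.Countable → BddAbove S → ∃ s, IsLUB S s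

/-- The interval algebra `Γ(ℤ ×ₗ G,(k,0)) = {a : 0 ≤ a ≤ (k,0)}` in the lexicographic
product `ℤ ×ₗ G`. -/
def Ek (G : Type*) [AddCommGroup G] [PartialOrder G] (k : ℤ) : Set (ℤ ×ₗ G) :=
  Set.Icc 0 (toLex (k, (0 : G)))

/-- The iterated difference `Δ₁(a₁,b₁)⋯Δₙ(aₙ,bₙ)F`, written as the signed sum over all
corners of the box `[a,b)`; the sign is `(-1)^(number of coordinates set to the lower
endpoint)`. -/
def volSum {M : Type*} [AddCommGroup M] {ι : Type*} [Fintype ι] [DecidableEq ι]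
    (F : (ι → ℝ) → M) (a b : ι → ℝ) : M :=
  ∑ S : Finset ι, (-1 : ℤ) ^ (Fintype.card ι - S.card) •
    F (fun i => if i ∈ S then b i else a i)

variable {G : Type*} [AddCommGroup G] [PartialOrder G]
variable {ι : Type*} [Fintype ι] [DecidableEq ι]

/-- An `n`-dimensional pseudo spectral resolution with values in `Ek G k`:
the volume condition, left-continuity, vanishing along each coordinate, and the range
has a least upper bound in `Ek G k`. -/
structure IsPseudoSR (k : ℤ) (F : (ι → ℝ) → ℤ ×ₗ G) : Prop where
  mem : ∀ t, F t ∈ Ek G k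
  vol : ∀ a b : ι → ℝ, (∀ i, a i ≤ b i) → 0 ≤ volSum F a b
  leftCont : ∀ t, IsLUB (F '' {s | ∀ i, s i < t i}) (F t)
  coordZero : ∀ (i : ι) (t : ι → ℝ),
    IsGLB (Set.range fun r => F (Function.update t i r)) 0
  rangeSup : ∃ u ∈ Ek G k, IsLUB (Set.range F) u

/-- An `n`-dimensional spectral resolution on the perfect algebra `Γ(ℤ ×ₗ G,(1,0))`:
the volume condition, left-continuity, vanishing along each coordinate, total mass `(1,0)`,
and the characteristic-point condition (v). -/
structure IsSR1 (F : (ι → ℝ) → ℤ ×ₗ G) : Prop where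
  mem : ∀ t, F t ∈ Ek G 1
  vol : ∀ a b : ι → ℝ, (∀ i, a i ≤ b i) → 0 ≤ volSum F a b
  leftCont : ∀ t, IsLUB (F '' {s | ∀ i, s i < t i}) (F t)
  coordZero : ∀ (i : ι) (t : ι → ℝ),
    IsGLB (Set.range fun r => F (Function.update t i r)) 0
  total : IsLUB (Set.range F) (toLex (1, (0 : G)))
  charPt : ∃ t0 : ι → ℝ,
    (∀ s, (ofLex (F s)).1 = 1 ↔ ∀ i, t0 i < s i) ∧
    ∃ a ∈ Ek G 1, IsGLB (F '' {s | ∀ i, t0 i < s i}) a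

/-- A two-dimensional spectral resolution on the perfect algebra `Γ(ℤ ×ₗ G,(1,0))`. -/
structure IsSR2 (F : ℝ → ℝ → ℤ ×ₗ G) : Prop where
  mem : ∀ s t, F s t ∈ Ek G 1
  vol : ∀ a₁ b₁ a₂ b₂ : ℝ, a₁ ≤ b₁ → a₂ ≤ b₂ →
    0 ≤ F b₁ b₂ - F a₁ b₂ - F b₁ a₂ + F a₁ a₂
  leftCont : ∀ s t : ℝ, IsLUB {y | ∃ s' t' : ℝ, s' < s ∧ t' < t ∧ y = F s' t'} (F s t)
  coordZero₁ : ∀ s : ℝ, IsGLB (Set.range fun t => F s t) 0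
  coordZero₂ : ∀ t : ℝ, IsGLB (Set.range fun s => F s t) 0
  total : IsLUB {y | ∃ s t : ℝ, y = F s t} (toLex (1, (0 : G)))
  charPt : ∃ s₀ t₀ : ℝ,
    (∀ s t, (ofLex (F s t)).1 = 1 ↔ (s₀ < s ∧ t₀ < t)) ∧
    ∃ a ∈ Ek G 1, IsGLB {y | ∃ s t : ℝ, s₀ < s ∧ t₀ < t ∧ y = F s t} a

/-- An observable on `Γ(ℤ ×ₗ G,(k,0))` defined on the Borel (measurable) subsets of `X`. -/
def IsObs {X : Type*} [MeasurableSpace X] (k : ℤ) (x : Set X → ℤ ×ₗ G) : Prop :=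
  (∀ A, MeasurableSet A → x A ∈ Ek G k) ∧
  x Set.univ = toLex (k, (0 : G)) ∧
  (∀ A B : Set X, MeasurableSet A → MeasurableSet B → Disjoint A B →
    x (A ∪ B) = x A + x B) ∧
  (∀ A : ℕ → Set X, (∀ i, MeasurableSet (A i)) → Monotone A →
    IsLUB (Set.range fun i => x (A i)) (x (⋃ i, A i)))

end Paper

set_option linter.unusedSectionVars false
namespace PF
open Paper
variable {G : Type*} [AddCommGroup G] [PartialOrder G]
  [CovariantClass G G (· + ·) (· ≤ ·)]

lemma gadd_le_gadd {a b c d : G} (h1 : a ≤ b) (h2 : c ≤ d) : a + c ≤ b + d := by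
  calc a + c ≤ a + d := add_le_add_right h2 a
    _ = d + a := add_comm _ _
    _ ≤ d + b := add_le_add_right h1 d
    _ = b + d := add_comm _ _

lemma lex_le_iff {a b : ℤ ×ₗ G} :
    a ≤ b ↔ (ofLex a).1 < (ofLex b).1 ∨ ((ofLex a).1 = (ofLex b).1 ∧ (ofLex a).2 ≤ (ofLex b).2) :=
  Prod.Lex.le_iff

lemma lex_lt_iff {a b : ℤ ×ₗ G} :
    a < b ↔ (ofLex a).1 < (ofLex b).1 ∨ ((ofLex a).1 = (ofLex b).1 ∧ (ofLex a).2 < (ofLex b).2) :=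
  Prod.Lex.lt_iff

lemma lex_add_le_add {a b c d : ℤ ×ₗ G} (h1 : a ≤ b) (h2 : c ≤ d) : a + c ≤ b + d := by
  rcases lex_le_iff.1 h1 with h | ⟨he, hs⟩ <;> rcases lex_le_iff.1 h2 with h' | ⟨he', hs'⟩ <;>
    apply lex_le_iff.2 <;> simp only [ofLex_add, Prod.fst_add, Prod.snd_add] <;>
    [left; left; left; right] <;>
    first
      | (constructor <;> omega)
      | (refine ⟨by omega, gadd_le_gadd hs hs'⟩)
      | omega

lemma lex_add_le_add_left (c : ℤ ×ₗ G) {a b : ℤ ×ₗ G} (h : a ≤ b) : c + a ≤ c + b :=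
  lex_add_le_add le_rfl h

lemma lex_fst_mono {a b : ℤ ×ₗ G} (h : a ≤ b) : (ofLex a).1 ≤ (ofLex b).1 := by
  rcases lex_le_iff.1 h with h' | ⟨h', _⟩ <;> omega

lemma lex_snd_mono {a b : ℤ ×ₗ G} (h : a ≤ b) (he : (ofLex a).1 = (ofLex b).1) :
    (ofLex a).2 ≤ (ofLex b).2 := by
  rcases lex_le_iff.1 h with h' | ⟨_, h'⟩
  · exact absurd h' (by omega)
  · exact h'

lemma Ek_fst {v : ℤ ×ₗ G} (h : v ∈ Ek G 1) : (ofLex v).1 = 0 ∨ (ofLex v).1 = 1 := by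
  obtain ⟨h0, h1⟩ := h
  have e0 := lex_fst_mono h0
  have e1 := lex_fst_mono h1
  simp only [ofLex_zero, Prod.fst_zero, ofLex_toLex] at e0 e1
  omega

lemma Ek_snd_nonpos {v : ℤ ×ₗ G} (h : v ∈ Ek G 1) (h1 : (ofLex v).1 = 1) :
    (ofLex v).2 ≤ 0 := by
  rcases lex_le_iff.1 h.2 with h' | ⟨_, h'⟩
  · simp only [ofLex_toLex, h1] at h'; omega
  · simpa using h'

lemma Ek_snd_nonneg {v : ℤ ×ₗ G} (h : v ∈ Ek G 1) (h0 : (ofLex v).1 = 0) :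
    0 ≤ (ofLex v).2 := by
  rcases lex_le_iff.1 h.1 with h' | ⟨_, h'⟩
  · simp only [ofLex_zero, Prod.fst_zero, h0] at h'; omega
  · simpa using h'

-- observable helpers
variable {X : Type*} [MeasurableSpace X] {k : ℤ} {x : Set X → ℤ ×ₗ G}

lemma obs_empty (hx : IsObs k x) : x ∅ = 0 := by
  have := hx.2.2.1 ∅ ∅ MeasurableSet.empty MeasurableSet.empty (disjoint_bot_left)
  simp only [Set.union_empty] at this
  exact (add_right_injective (x ∅) (by simpa using this.symm))

lemma obs_nonneg (hx : IsObs k x) {A : Set X} (hA : MeasurableSet A) : 0 ≤ x A :=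
  (hx.1 A hA).1

lemma obs_diff (hx : IsObs k x) {A B : Set X} (hA : MeasurableSet A) (hB : MeasurableSet B)
    (hAB : A ⊆ B) : x (B \ A) = x B - x A := by
  have h := hx.2.2.1 A (B \ A) hA (hB.diff hA) disjoint_sdiff_self_right
  rw [Set.union_diff_cancel hAB] at h
  rw [h]; abel

lemma obs_mono (hx : IsObs k x) {A B : Set X} (hA : MeasurableSet A) (hB : MeasurableSet B)
    (hAB : A ⊆ B) : x A ≤ x B := by
  have h := hx.2.2.1 A (B \ A) hA (hB.diff hA) disjoint_sdiff_self_right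
  rw [Set.union_diff_cancel hAB] at h
  rw [h]
  simpa using lex_add_le_add (le_refl (x A)) (obs_nonneg hx (hB.diff hA))

lemma obs_compl (hx : IsObs k x) {A : Set X} (hA : MeasurableSet A) :
    x Aᶜ = toLex (k, (0:G)) - x A := by
  have h := hx.2.2.1 A Aᶜ hA hA.compl disjoint_compl_right
  rw [Set.union_compl_self, hx.2.1] at h
  rw [h]; abel

-- LUB arithmetic
lemma le_sub_of_add_le' {a b c : G} (h : a + b ≤ c) : b ≤ c - a := by
  have := add_le_add_left h (-a)
  simpa [sub_eq_add_neg, add_comm, ← add_assoc] using this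

lemma add_le_of_le_sub' {a b c : G} (h : b ≤ c - a) : a + b ≤ c := by
  have := add_le_add_right h a
  rwa [show a + (c - a) = c by abel] at this

lemma isLUB_add_seq {u v : ℕ → G} (hu : Monotone u) (hv : Monotone v) {U V : G}
    (hU : IsLUB (Set.range u) U) (hV : IsLUB (Set.range v) V) :
    IsLUB (Set.range fun n => u n + v n) (U + V) := by
  constructor
  · rintro _ ⟨n, rfl⟩
    exact gadd_le_gadd (hU.1 ⟨n, rfl⟩) (hV.1 ⟨n, rfl⟩)
  · intro W hW
    have h1 : ∀ l, V ≤ W - u l := by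
      intro l
      apply hV.2
      rintro _ ⟨m, rfl⟩
      refine le_sub_of_add_le' (le_trans ?_ (hW ⟨max l m, rfl⟩))
      exact gadd_le_gadd (hu (le_max_left l m)) (hv (le_max_right l m))
    have h2 : U ≤ W - V := by
      apply hU.2
      rintro _ ⟨l, rfl⟩
      refine le_sub_of_add_le' ?_
      rw [add_comm]
      exact add_le_of_le_sub' (h1 l)
    have h3 := add_le_of_le_sub' h2
    rwa [add_comm] at h3

lemma finsetSum_le_sum {ι : Type*} {s : Finset ι} {f g : ι → G} (h : ∀ j ∈ s, f j ≤ g j) :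
    ∑ j ∈ s, f j ≤ ∑ j ∈ s, g j := by
  induction s using Finset.induction_on with
  | empty => simp
  | insert a t hnotmem ih =>
    rw [Finset.sum_insert hnotmem, Finset.sum_insert hnotmem]
    exact gadd_le_gadd (h a (Finset.mem_insert_self a t))
      (ih fun j hj => h j (Finset.mem_insert_of_mem hj))

lemma finsetSum_nonpos {ι : Type*} {s : Finset ι} {f : ι → G} (h : ∀ j ∈ s, f j ≤ 0) :
    ∑ j ∈ s, f j ≤ 0 := by
  simpa using finsetSum_le_sum (g := fun _ => (0:G)) h

lemma isLUB_finsetSum_zero {ι : Type*} (s : Finset ι) (f : ι → ℕ → G)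
    (hmono : ∀ j ∈ s, Monotone (f j)) (hlub : ∀ j ∈ s, IsLUB (Set.range (f j)) 0) :
    IsLUB (Set.range fun n => ∑ j ∈ s, f j n) 0 := by
  induction s using Finset.induction_on with
  | empty => simpa using isLUB_singleton
  | insert a t hnotmem ih =>
    have h := isLUB_add_seq (hmono a (Finset.mem_insert_self a t))
      (fun n m hnm => finsetSum_le_sum fun j hj => hmono j (Finset.mem_insert_of_mem hj) hnm)
      (hlub a (Finset.mem_insert_self a t))
      (ih (fun j hj => hmono j (Finset.mem_insert_of_mem hj))
          (fun j hj => hlub j (Finset.mem_insert_of_mem hj)))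
    simpa [Finset.sum_insert hnotmem] using h

lemma isLUB_const_add_lex {w : ℕ → ℤ ×ₗ G} {W a : ℤ ×ₗ G} (h : IsLUB (Set.range w) W) :
    IsLUB (Set.range fun n => a + w n) (a + W) := by
  constructor
  · rintro _ ⟨n, rfl⟩
    exact lex_add_le_add_left a (h.1 ⟨n, rfl⟩)
  · intro B hB
    have h1 : W ≤ -a + B := by
      apply h.2
      rintro _ ⟨n, rfl⟩
      have := lex_add_le_add_left (-a) (hB ⟨n, rfl⟩)
      rwa [show -a + (a + w n) = w n by abel] at this
    have := lex_add_le_add_left a h1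
    rwa [show a + (-a + B) = B by abel] at this

lemma isLUB_lex_zero_snd {S : ℕ → G} (h : IsLUB (Set.range S) 0) :
    IsLUB (Set.range fun n => toLex ((0:ℤ), S n)) 0 := by
  constructor
  · rintro _ ⟨n, rfl⟩
    exact lex_le_iff.2 (Or.inr ⟨rfl, by simpa using h.1 ⟨n, rfl⟩⟩)
  · intro B hB
    by_cases hb : (0:ℤ) < (ofLex B).1
    · exact lex_le_iff.2 (Or.inl (by simpa using hb))
    · have hall : ∀ n, (0:ℤ) = (ofLex B).1 ∧ S n ≤ (ofLex B).2 := by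
        intro n
        rcases lex_le_iff.1 (hB ⟨n, rfl⟩) with h' | ⟨h', h''⟩
        · exact absurd (by simpa using h') hb
        · exact ⟨by simpa using h', by simpa using h''⟩
      refine lex_le_iff.2 (Or.inr ⟨by simpa using (hall 0).1, ?_⟩)
      have : 0 ≤ (ofLex B).2 := h.2 (by rintro _ ⟨n, rfl⟩; exact (hall n).2)
      simpa using this

end PF
namespace PF
open Paper

lemma marg_Iio {G : Type*} [AddCommGroup G] [Lattice G]
    [CovariantClass G G (· + ·) (· ≤ ·)] {n : ℕ}
    (xs : Fin n → Set ℝ → ℤ ×ₗ G) (hxs : ∀ i, IsObs 1 (xs i))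
    (x : Set (Fin n → ℝ) → ℤ ×ₗ G) (hx : IsObs 1 x)
    (hmeet : ∀ t : Fin n → ℝ,
      IsGLB (Set.range fun i => xs i (Set.Iio (t i))) (x {s | ∀ i, s i < t i}))
    (i : Fin n) (c : ℝ) :
    x ((fun s : Fin n → ℝ => s i) ⁻¹' Set.Iio c) = xs i (Set.Iio c) := by
  set a := xs i (Set.Iio c) with ha
  -- σ-continuity of each xs j along Iio k
  have hLUBj : ∀ j, IsLUB (Set.range fun k : ℕ => xs j (Set.Iio (k:ℝ)))
      (toLex ((1:ℤ), (0:G))) := by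
    intro j
    have h := (hxs j).2.2.2 (fun k : ℕ => Set.Iio (k:ℝ)) (fun k => measurableSet_Iio)
      (fun k l hkl => Set.Iio_subset_Iio (by exact_mod_cast hkl))
    have huniv : (⋃ k : ℕ, Set.Iio ((k:ℕ):ℝ)) = Set.univ := by
      ext r
      simp only [Set.mem_iUnion, Set.mem_Iio, Set.mem_univ, iff_true]
      exact exists_nat_gt r
    rw [huniv, (hxs j).2.1] at h
    exact h
  -- eventually first coordinate 1
  have hev : ∀ j, ∃ K : ℕ, (ofLex (xs j (Set.Iio (K:ℝ)))).1 = 1 := by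
    intro j
    by_contra hcon
    push_neg at hcon
    have hfst0 : ∀ K : ℕ, (ofLex (xs j (Set.Iio (K:ℝ)))).1 = 0 := fun K =>
      (Ek_fst ((hxs j).1 _ measurableSet_Iio)).resolve_right (hcon K)
    by_cases hG : ∀ w : G, 0 ≤ w
    · have hzero : ∀ w : G, w = 0 := by
        intro w
        refine le_antisymm ?_ (hG w)
        have h2 := add_le_add_left (hG (-w)) w
        simpa using h2
      have hub : (0 : ℤ ×ₗ G) ∈ upperBounds (Set.range fun k : ℕ => xs j (Set.Iio (k:ℝ))) := by
        rintro _ ⟨k, rfl⟩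
        refine lex_le_iff.2 (Or.inr ⟨by simpa using hfst0 k, ?_⟩)
        rw [hzero ((ofLex (xs j (Set.Iio (k:ℝ)))).2)]
        simp
      have := (hLUBj j).2 hub
      rcases lex_le_iff.1 this with h' | ⟨h', _⟩ <;>
        simp only [ofLex_toLex, ofLex_zero, Prod.fst_zero] at h' <;> omega
    · push_neg at hG
      obtain ⟨w, hw⟩ := hG
      have hub : toLex ((1:ℤ), w) ∈
          upperBounds (Set.range fun k : ℕ => xs j (Set.Iio (k:ℝ))) := by
        rintro _ ⟨k, rfl⟩
        exact lex_le_iff.2 (Or.inl (by simp [hfst0 k]))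
      have := (hLUBj j).2 hub
      rcases lex_le_iff.1 this with h' | ⟨_, h'⟩
      · simp only [ofLex_toLex] at h'; omega
      · exact hw (by simpa using h')
  choose K hK using hev
  set k₀ := Finset.univ.sup K with hk₀
  have hIioMono : ∀ j : Fin n, ∀ k l : ℕ, k ≤ l →
      xs j (Set.Iio (k:ℝ)) ≤ xs j (Set.Iio (l:ℝ)) := by
    intro j k l hkl
    exact obs_mono (hxs j) measurableSet_Iio measurableSet_Iio
      (Set.Iio_subset_Iio (by exact_mod_cast hkl))
  have hfst1 : ∀ (j : Fin n) (k : ℕ), (ofLex (xs j (Set.Iio ((k₀ + k : ℕ):ℝ)))).1 = 1 := by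
    intro j k
    have h1 := lex_fst_mono (hIioMono j (K j) (k₀ + k)
      (le_trans (Finset.le_sup (Finset.mem_univ j)) (Nat.le_add_right _ _)))
    have h2 := Ek_fst ((hxs j).1 _ (measurableSet_Iio : MeasurableSet (Set.Iio ((k₀+k:ℕ):ℝ))))
    rw [hK j] at h1
    omega
  -- the second components
  set h : Fin n → ℕ → G := fun j k => (ofLex (xs j (Set.Iio ((k₀ + k : ℕ):ℝ)))).2 with hh
  have hval : ∀ (j : Fin n) (k : ℕ),
      xs j (Set.Iio ((k₀ + k : ℕ):ℝ)) = toLex ((1:ℤ), h j k) := by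
    intro j k
    rw [← toLex_ofLex (xs j (Set.Iio ((k₀ + k : ℕ):ℝ)))]
    exact congrArg toLex (Prod.ext (hfst1 j k) rfl)
  have hmono_h : ∀ j : Fin n, Monotone (h j) := by
    intro j k l hkl
    exact lex_snd_mono (hIioMono j (k₀+k) (k₀+l) (by omega))
      (by rw [hfst1 j k, hfst1 j l])
  have hnonpos_h : ∀ (j : Fin n) (k : ℕ), h j k ≤ 0 := fun j k =>
    Ek_snd_nonpos ((hxs j).1 _ measurableSet_Iio) (hfst1 j k)
  have hLUBh : ∀ j : Fin n, IsLUB (Set.range (h j)) 0 := by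
    intro j
    constructor
    · rintro _ ⟨k, rfl⟩
      exact hnonpos_h j k
    · intro H hH
      have hub : toLex ((1:ℤ), H) ∈
          upperBounds (Set.range fun k : ℕ => xs j (Set.Iio (k:ℝ))) := by
        rintro _ ⟨k, rfl⟩
        refine le_trans (hIioMono j k (k₀ + k) (by omega)) ?_
        rw [hval j k]
        exact lex_le_iff.2 (Or.inr ⟨by simp, by simpa using hH ⟨k, rfl⟩⟩)
      have := lex_snd_mono ((hLUBj j).2 hub) (by simp)
      simpa using this
  -- the rectangles
  set t : ℕ → Fin n → ℝ := fun k j => if j = i then c else ((k₀ + k : ℕ):ℝ) with ht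
  set R : ℕ → Set (Fin n → ℝ) := fun k => {s | ∀ j, s j < t k j} with hR
  have htki : ∀ k, t k i = c := fun k => if_pos rfl
  have htkj : ∀ k (j : Fin n), j ≠ i → t k j = ((k₀ + k : ℕ):ℝ) := fun k j hj => if_neg hj
  have hRmeas : ∀ k, MeasurableSet (R k) := by
    intro k
    have : R k = ⋂ j, (fun s : Fin n → ℝ => s j) ⁻¹' Set.Iio (t k j) := by
      ext s; simp [hR, Set.mem_iInter]
    rw [this]
    exact MeasurableSet.iInter fun j => measurable_pi_apply j measurableSet_Iio
  have hRmono : Monotone R := by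
    intro k l hkl s hs j
    have h1 := hs j
    by_cases hj : j = i
    · subst hj; rwa [htki] at h1 ⊢
    · rw [htkj k j hj] at h1
      rw [htkj l j hj]
      refine lt_of_lt_of_le h1 (by exact_mod_cast Nat.add_le_add_left hkl k₀)
  have hUnion : (⋃ k, R k) = (fun s : Fin n → ℝ => s i) ⁻¹' Set.Iio c := by
    ext s
    simp only [Set.mem_iUnion, Set.mem_preimage, Set.mem_Iio]
    constructor
    · rintro ⟨k, hk⟩
      have := hk i
      rwa [htki] at this
    · intro hs
      obtain ⟨M, hM⟩ := Finite.exists_le s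
      obtain ⟨N, hN⟩ := exists_nat_gt M
      refine ⟨N, fun j => ?_⟩
      by_cases hj : j = i
      · subst hj; rwa [htki]
      · rw [htkj N j hj]
        refine lt_of_le_of_lt (hM j) (lt_of_lt_of_le hN ?_)
        exact_mod_cast Nat.le_add_left N k₀
  have hL := hx.2.2.2 R hRmeas hRmono
  rw [hUnion] at hL
  -- upper bound direction
  have ha_ub : a ∈ upperBounds (Set.range fun k => x (R k)) := by
    rintro _ ⟨k, rfl⟩
    have := (hmeet (t k)).1 (Set.mem_range.2 ⟨i, rfl⟩)
    rwa [htki k] at this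
  refine le_antisymm (hL.2 ha_ub) ?_
  -- lower bound direction
  have hS : IsLUB (Set.range fun k => ∑ j ∈ Finset.univ.erase i, h j k) 0 :=
    isLUB_finsetSum_zero _ _ (fun j _ => hmono_h j) (fun j _ => hLUBh j)
  set d : ℕ → ℤ ×ₗ G := fun k => a + toLex ((0:ℤ), ∑ j ∈ Finset.univ.erase i, h j k) with hd
  have haEk : a ∈ Ek G 1 := (hxs i).1 _ measurableSet_Iio
  have hdk : ∀ k, d k ≤ x (R k) := by
    intro k
    refine (hmeet (t k)).2 ?_
    rintro _ ⟨j, rfl⟩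
    show d k ≤ xs j (Set.Iio (t k j))
    by_cases hj : j = i
    · rw [hj, htki k]
      have hle : toLex ((0:ℤ), ∑ j ∈ Finset.univ.erase i, h j k) ≤ (0 : ℤ ×ₗ G) :=
        lex_le_iff.2 (Or.inr ⟨rfl, by
          show (∑ j ∈ Finset.univ.erase i, h j k) ≤ (0:G)
          exact finsetSum_nonpos fun j _ => hnonpos_h j k⟩)
      calc d k ≤ a + 0 := lex_add_le_add_left a hle
        _ = a := add_zero a
    · rw [htkj k j hj, hval j k]
      rcases Ek_fst haEk with hfa | hfa
      · refine lex_le_iff.2 (Or.inl ?_)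
        simp only [hd, ofLex_add, Prod.fst_add, ofLex_toLex, hfa]
        simp [hfa]
      · refine lex_le_iff.2 (Or.inr ⟨?_, ?_⟩)
        · simp only [hd, ofLex_add, Prod.fst_add, ofLex_toLex]
          simp [hfa]
        · simp only [hd, ofLex_add, Prod.snd_add, ofLex_toLex]
          have h1 : (ofLex a).2 ≤ 0 := Ek_snd_nonpos haEk hfa
          have h2 : ∑ j' ∈ Finset.univ.erase i, h j' k ≤ h j k := by
            have hjmem : j ∈ Finset.univ.erase i := Finset.mem_erase.2 ⟨hj, Finset.mem_univ j⟩
            rw [← Finset.sum_erase_add _ _ hjmem]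
            have h3 : ∑ j' ∈ (Finset.univ.erase i).erase j, h j' k ≤ 0 :=
              finsetSum_nonpos fun j' _ => hnonpos_h j' k
            calc ∑ j' ∈ (Finset.univ.erase i).erase j, h j' k + h j k
                ≤ 0 + h j k := gadd_le_gadd h3 le_rfl
              _ = h j k := zero_add _
          calc (ofLex a).2 + ∑ j' ∈ Finset.univ.erase i, h j' k
              ≤ 0 + h j k := gadd_le_gadd h1 h2
            _ = h j k := zero_add _
  have hdLUB : IsLUB (Set.range d) a := by
    have h1 := isLUB_const_add_lex (a := a) (isLUB_lex_zero_snd hS)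
    simpa [hd] using h1
  exact hdLUB.2 (by rintro _ ⟨k, rfl⟩; exact (hdk k).trans (hL.1 ⟨k, rfl⟩))

end PF

namespace PF
open Paper

lemma marg_full {G : Type*} [AddCommGroup G] [Lattice G]
    [CovariantClass G G (· + ·) (· ≤ ·)] {n : ℕ}
    (xs : Fin n → Set ℝ → ℤ ×ₗ G) (hxs : ∀ i, IsObs 1 (xs i))
    (x : Set (Fin n → ℝ) → ℤ ×ₗ G) (hx : IsObs 1 x)
    (hmeet : ∀ t : Fin n → ℝ,
      IsGLB (Set.range fun i => xs i (Set.Iio (t i))) (x {s | ∀ i, s i < t i}))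
    (i : Fin n) {A : Set ℝ} (hA : MeasurableSet A) :
    x ((fun s : Fin n → ℝ => s i) ⁻¹' A) = xs i A := by
  have hpre : ∀ {B : Set ℝ}, MeasurableSet B →
      MeasurableSet ((fun s : Fin n → ℝ => s i) ⁻¹' B) :=
    fun hB => measurable_pi_apply i hB
  refine MeasurableSpace.induction_on_inter
    (C := fun A _ => x ((fun s : Fin n → ℝ => s i) ⁻¹' A) = xs i A)
    (BorelSpace.measurable_eq.trans (borel_eq_generateFrom_Iio ℝ)) isPiSystem_Iio
    ?_ ?_ ?_ ?_ _ hA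
  · simp [obs_empty hx, obs_empty (hxs i)]
  · rintro _ ⟨c, rfl⟩
    exact marg_Iio xs hxs x hx hmeet i c
  · intro B hB hC
    rw [Set.preimage_compl, obs_compl hx (hpre hB), hC, obs_compl (hxs i) hB]
  · intro f hdisj hfm hfC
    have hacc0 : Set.accumulate f 0 = f 0 := by
      ext y; simp [Set.mem_accumulate]
    have haccsucc : ∀ m, Set.accumulate f (m+1) = Set.accumulate f m ∪ f (m+1) := by
      intro m; ext y
      simp only [Set.mem_accumulate, Set.mem_union]
      constructor
      · rintro ⟨z, hz, hy⟩
        rcases Nat.lt_succ_iff_lt_or_eq.1 (Nat.lt_succ_of_le hz) with h' | h'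
        · exact Or.inl ⟨z, by omega, hy⟩
        · subst h'; exact Or.inr hy
      · rintro (⟨z, hz, hy⟩ | hy)
        · exact ⟨z, by omega, hy⟩
        · exact ⟨m+1, le_rfl, hy⟩
    have haccmeas : ∀ m, MeasurableSet (Set.accumulate f m) := by
      intro m; induction m with
      | zero => rw [hacc0]; exact hfm 0
      | succ m ih => rw [haccsucc]; exact ih.union (hfm (m+1))
    have haccdisj : ∀ m, Disjoint (Set.accumulate f m) (f (m+1)) := by
      intro m
      rw [Set.disjoint_left]
      intro y hy hy2
      obtain ⟨z, hz, hyz⟩ := Set.mem_accumulate.1 hy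
      exact Set.disjoint_left.1 (hdisj (show z ≠ m+1 by omega)) hyz hy2
    have key : ∀ m, x ((fun s : Fin n → ℝ => s i) ⁻¹' Set.accumulate f m)
        = xs i (Set.accumulate f m) := by
      intro m; induction m with
      | zero => rw [hacc0]; exact hfC 0
      | succ m ih =>
        rw [haccsucc, Set.preimage_union,
          hx.2.2.1 _ _ (hpre (haccmeas m)) (hpre (hfm (m+1))) ((haccdisj m).preimage _),
          ih, hfC (m+1), ← (hxs i).2.2.1 _ _ (haccmeas m) (hfm (m+1)) (haccdisj m)]
    have e1 := hx.2.2.2 (fun m => (fun s : Fin n → ℝ => s i) ⁻¹' Set.accumulate f m)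
      (fun m => hpre (haccmeas m))
      (fun a b hab => Set.preimage_mono (Set.monotone_accumulate hab))
    have e2 := (hxs i).2.2.2 (Set.accumulate f) haccmeas Set.monotone_accumulate
    rw [← Set.preimage_iUnion, Set.iUnion_accumulate] at e1
    rw [Set.iUnion_accumulate] at e2
    simp only [key] at e1
    exact e1.unique e2

end PF

namespace PF
open Paper

noncomputable def dObs (p q u : ℝ) : Set ℝ → ℤ ×ₗ ℝ := fun A =>
  (if p ∈ A then toLex ((0:ℤ), u) else 0) + (if q ∈ A then toLex ((1:ℤ), -u) else 0)

lemma dObs_pos1 {u : ℝ} (hu : 0 ≤ u) : (0 : ℤ ×ₗ ℝ) ≤ toLex ((0:ℤ), u) :=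
  lex_le_iff.2 (Or.inr ⟨rfl, by simpa using hu⟩)

lemma dObs_pos2 {u : ℝ} : (0 : ℤ ×ₗ ℝ) ≤ toLex ((1:ℤ), -u) :=
  lex_le_iff.2 (Or.inl (by simp))

lemma ite_zero_mono {c : ℤ ×ₗ ℝ} (hc : (0:ℤ ×ₗ ℝ) ≤ c) {P Q : Prop} [Decidable P] [Decidable Q]
    (h : P → Q) : (if P then c else 0) ≤ (if Q then c else 0) := by
  by_cases hP : P
  · rw [if_pos hP, if_pos (h hP)]
  · rw [if_neg hP]
    by_cases hQ : Q
    · rw [if_pos hQ]; exact hc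
    · rw [if_neg hQ]

lemma dObs_mono {p q u : ℝ} (hu : 0 ≤ u) {A B : Set ℝ} (hAB : A ⊆ B) :
    dObs p q u A ≤ dObs p q u B :=
  lex_add_le_add (ite_zero_mono (dObs_pos1 hu) (@hAB p)) (ite_zero_mono dObs_pos2 (@hAB q))

lemma dObs_isObs {p q u : ℝ} (hu : 0 ≤ u) : IsObs 1 (dObs p q u) := by
  refine ⟨?_, ?_, ?_, ?_⟩
  · intro A _
    constructor
    · have h1 : (0:ℤ ×ₗ ℝ) ≤ if p ∈ A then toLex ((0:ℤ), u) else 0 := by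
        by_cases h : p ∈ A <;> simp [h, dObs_pos1 hu]
      have h2 : (0:ℤ ×ₗ ℝ) ≤ if q ∈ A then toLex ((1:ℤ), -u) else 0 := by
        by_cases h : q ∈ A <;> simp [h, dObs_pos2 (u := u)]
      simpa [dObs] using lex_add_le_add h1 h2
    · show dObs p q u A ≤ toLex ((1:ℤ), (0:ℝ))
      unfold dObs
      by_cases h1 : p ∈ A <;> by_cases h2 : q ∈ A <;> simp only [h1, h2, if_true, if_false,
        if_pos, if_neg, add_zero, zero_add]
      · exact le_of_eq (by
          show toLex (((0:ℤ),u) + ((1:ℤ),-u)) = toLex ((1:ℤ), (0:ℝ))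
          norm_num)
      · exact lex_le_iff.2 (Or.inl (by simp))
      · exact lex_le_iff.2 (Or.inr ⟨by simp, by simpa using hu⟩)
      · exact lex_le_iff.2 (Or.inl (by simp))
  · unfold dObs
    simp only [Set.mem_univ, if_true]
    show toLex (((0:ℤ),u) + ((1:ℤ),-u)) = toLex ((1:ℤ), (0:ℝ))
    norm_num
  · intro A B _ _ hAB
    unfold dObs
    by_cases h1 : p ∈ A <;> by_cases h2 : p ∈ B <;> by_cases h3 : q ∈ A <;> by_cases h4 : q ∈ B <;>
      first
        | exact absurd h2 (Set.disjoint_left.1 hAB h1)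
        | exact absurd h4 (Set.disjoint_left.1 hAB h3)
        | (simp only [Set.mem_union, h1, h2, h3, h4, if_true, if_false, true_or, or_true,
            or_false, false_or, or_self]; abel)
  · intro A hA hmono
    constructor
    · rintro _ ⟨k, rfl⟩
      exact dObs_mono hu (Set.subset_iUnion A k)
    · intro b hb
      obtain ⟨k, hk1, hk2⟩ : ∃ k, (p ∈ ⋃ i, A i ↔ p ∈ A k) ∧ (q ∈ ⋃ i, A i ↔ q ∈ A k) := by
        by_cases hp : p ∈ ⋃ i, A i <;> by_cases hq : q ∈ ⋃ i, A i
        · obtain ⟨k1, hk1⟩ := Set.mem_iUnion.1 hp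
          obtain ⟨k2, hk2⟩ := Set.mem_iUnion.1 hq
          exact ⟨max k1 k2, iff_of_true hp (hmono (le_max_left _ _) hk1),
            iff_of_true hq (hmono (le_max_right _ _) hk2)⟩
        · obtain ⟨k1, hk1⟩ := Set.mem_iUnion.1 hp
          exact ⟨k1, iff_of_true hp hk1,
            iff_of_false hq fun h => hq (Set.mem_iUnion.2 ⟨k1, h⟩)⟩
        · obtain ⟨k2, hk2⟩ := Set.mem_iUnion.1 hq
          exact ⟨k2, iff_of_false hp fun h => hp (Set.mem_iUnion.2 ⟨k2, h⟩),
            iff_of_true hq hk2⟩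
        · exact ⟨0, iff_of_false hp fun h => hp (Set.mem_iUnion.2 ⟨0, h⟩),
            iff_of_false hq fun h => hq (Set.mem_iUnion.2 ⟨0, h⟩)⟩
      have : dObs p q u (⋃ i, A i) = dObs p q u (A k) := by
        unfold dObs
        rw [if_congr hk1 rfl rfl, if_congr hk2 rfl rfl]
      rw [this]
      exact hb ⟨k, rfl⟩

end PF


open Paper in
/-- properties of the `n`-dimensional meet joint observable `x` of
one-dimensional observables `x₁,…,xₙ` on the perfect MV-algebra `Γ(ℤ ×ₗ G,(1,0))`:
(1) its marginals are the `xᵢ`'s; (2) `x(A₁ × ⋯ × Aₙ)` is below each `xᵢ(Aᵢ)` (hence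
below their meet); moreover, for `G = ℝ` the inequality in (2) can be strict. -/
theorem statement_18 {G : Type*} [AddCommGroup G] [Lattice G]
    [CovariantClass G G (· + ·) (· ≤ ·)]
    (hsc : DedekindSC G)
    {n : ℕ} (hn : 1 ≤ n)
    (xs : Fin n → Set ℝ → ℤ ×ₗ G) (hxs : ∀ i, IsObs 1 (xs i))
    (x : Set (Fin n → ℝ) → ℤ ×ₗ G) (hx : IsObs 1 x)
    (hmeet : ∀ t : Fin n → ℝ,
      IsGLB (Set.range fun i => xs i (Set.Iio (t i))) (x {s | ∀ i, s i < t i})) :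
    -- (1) the marginals of `x` are the `xᵢ`'s
    (∀ (i : Fin n) (A : Set ℝ), MeasurableSet A →
      x ((fun s : Fin n → ℝ => s i) ⁻¹' A) = xs i A) ∧
    -- (2) `x(A₁ × ⋯ × Aₙ) ≤ xᵢ(Aᵢ)` for each `i`, i.e. `x(A₁ × ⋯ × Aₙ)` is below the meet
    (∀ A : Fin n → Set ℝ, (∀ i, MeasurableSet (A i)) →
      ∀ i : Fin n, x {s | ∀ j, s j ∈ A j} ≤ xs i (A i)) ∧
    -- moreover, the inequality can be strict: a concrete example over `G = ℝ`
    (∃ x' y' : Set ℝ → ℤ ×ₗ ℝ, IsObs 1 x' ∧ IsObs 1 y' ∧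
      x' {(2 : ℝ)} = toLex (0, 3) ∧ x' {(3 : ℝ)} = toLex (1, -3) ∧
      y' {(1 : ℝ)} = toLex (0, 4) ∧ y' {(5 : ℝ)} = toLex (1, -4) ∧
      ∀ z : Set (Fin 2 → ℝ) → ℤ ×ₗ ℝ, IsObs 1 z →
        (∀ s t : ℝ, IsGLB ({x' (Set.Iio s), y' (Set.Iio t)} : Set (ℤ ×ₗ ℝ))
          (z {p | p 0 < s ∧ p 1 < t})) →
        ∃ A B : Set ℝ, MeasurableSet A ∧ MeasurableSet B ∧
          ∃ mAB : ℤ ×ₗ ℝ, IsGLB ({x' A, y' B} : Set (ℤ ×ₗ ℝ)) mAB ∧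
            z {p | p 0 ∈ A ∧ p 1 ∈ B} < mAB) := by
  have hpart1 : ∀ (i : Fin n) (A : Set ℝ), MeasurableSet A →
      x ((fun s : Fin n → ℝ => s i) ⁻¹' A) = xs i A :=
    fun i A hA => PF.marg_full xs hxs x hx hmeet i hA
  refine ⟨hpart1, ?_, ?_⟩
  · intro A hA i
    have hsub : {s : Fin n → ℝ | ∀ j, s j ∈ A j} ⊆ (fun s : Fin n → ℝ => s i) ⁻¹' (A i) :=
      fun s hs => hs i
    have hmeas1 : MeasurableSet {s : Fin n → ℝ | ∀ j, s j ∈ A j} := by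
      have he : {s : Fin n → ℝ | ∀ j, s j ∈ A j}
          = ⋂ j, (fun s : Fin n → ℝ => s j) ⁻¹' (A j) := by
        ext s; simp [Set.mem_iInter]
      rw [he]
      exact MeasurableSet.iInter fun j => measurable_pi_apply j (hA j)
    have hm := PF.obs_mono hx hmeas1 (measurable_pi_apply i (hA i)) hsub
    rwa [hpart1 i (A i) (hA i)] at hm
  · -- the counterexample over G = ℝ
    have h30 : (0:ℝ) ≤ 3 := by norm_num
    have h40 : (0:ℝ) ≤ 4 := by norm_num
    refine ⟨PF.dObs 2 3 3, PF.dObs 1 5 4, PF.dObs_isObs h30, PF.dObs_isObs h40,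
      ?_, ?_, ?_, ?_, ?_⟩
    · show (if (2:ℝ) ∈ ({(2:ℝ)} : Set ℝ) then toLex ((0:ℤ), (3:ℝ)) else 0)
        + (if (3:ℝ) ∈ ({(2:ℝ)} : Set ℝ) then toLex ((1:ℤ), -(3:ℝ)) else 0) = toLex (0, 3)
      rw [if_pos (by norm_num), if_neg (by norm_num), add_zero]
    · show (if (2:ℝ) ∈ ({(3:ℝ)} : Set ℝ) then toLex ((0:ℤ), (3:ℝ)) else 0)
        + (if (3:ℝ) ∈ ({(3:ℝ)} : Set ℝ) then toLex ((1:ℤ), -(3:ℝ)) else 0) = toLex (1, -3)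
      rw [if_neg (by norm_num), if_pos (by norm_num), zero_add]
    · show (if (1:ℝ) ∈ ({(1:ℝ)} : Set ℝ) then toLex ((0:ℤ), (4:ℝ)) else 0)
        + (if (5:ℝ) ∈ ({(1:ℝ)} : Set ℝ) then toLex ((1:ℤ), -(4:ℝ)) else 0) = toLex (0, 4)
      rw [if_pos (by norm_num), if_neg (by norm_num), add_zero]
    · show (if (1:ℝ) ∈ ({(5:ℝ)} : Set ℝ) then toLex ((0:ℤ), (4:ℝ)) else 0)
        + (if (5:ℝ) ∈ ({(5:ℝ)} : Set ℝ) then toLex ((1:ℤ), -(4:ℝ)) else 0) = toLex (1, -4)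
      rw [if_neg (by norm_num), if_pos (by norm_num), zero_add]
    · intro z hz hzmeet
      -- values of x' and y' on lower rays
      have hxI2 : PF.dObs 2 3 3 (Set.Iio (2:ℝ)) = 0 := by
        unfold PF.dObs
        rw [if_neg (by norm_num [Set.mem_Iio]), if_neg (by norm_num [Set.mem_Iio]), add_zero]
      have hxI3 : PF.dObs 2 3 3 (Set.Iio (3:ℝ)) = toLex (0, 3) := by
        unfold PF.dObs
        rw [if_pos (by norm_num [Set.mem_Iio]), if_neg (by norm_num [Set.mem_Iio]), add_zero]
      have hyI5 : PF.dObs 1 5 4 (Set.Iio (5:ℝ)) = toLex (0, 4) := by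
        unfold PF.dObs
        rw [if_pos (by norm_num [Set.mem_Iio]), if_neg (by norm_num [Set.mem_Iio]), add_zero]
      have hyI6 : PF.dObs 1 5 4 (Set.Iio (6:ℝ)) = toLex (1, 0) := by
        unfold PF.dObs
        rw [if_pos (by norm_num [Set.mem_Iio]), if_pos (by norm_num [Set.mem_Iio])]
        show toLex (((0:ℤ), (4:ℝ)) + ((1:ℤ), -(4:ℝ))) = toLex (1, 0)
        norm_num
      have hval : ∀ s t : ℝ, z {p | p 0 < s ∧ p 1 < t}
          = (PF.dObs 2 3 3 (Set.Iio s)) ⊓ (PF.dObs 1 5 4 (Set.Iio t)) :=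
        fun s t => (hzmeet s t).unique isGLB_pair
      have hlt01 : (toLex ((0:ℤ), (3:ℝ))) ≤ toLex ((1:ℤ), (0:ℝ)) :=
        PF.lex_le_iff.2 (Or.inl (by simp))
      have hz36 : z {p | p 0 < 3 ∧ p 1 < 6} = toLex (0, 3) := by
        rw [hval, hxI3, hyI6, inf_eq_left.2 hlt01]
      have hz26 : z {p | p 0 < 2 ∧ p 1 < 6} = 0 := by
        rw [hval, hxI2, hyI6, inf_eq_left.2 (show (0 : ℤ ×ₗ ℝ) ≤ toLex ((1:ℤ), (0:ℝ)) from
          PF.lex_le_iff.2 (Or.inl (by simp)))]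
      have hz35 : z {p | p 0 < 3 ∧ p 1 < 5} = toLex (0, 3) := by
        rw [hval, hxI3, hyI5, inf_eq_left.2 (show toLex ((0:ℤ), (3:ℝ)) ≤ toLex ((0:ℤ), (4:ℝ)) from
          PF.lex_le_iff.2 (Or.inr ⟨rfl, by norm_num⟩))]
      have hz25 : z {p | p 0 < 2 ∧ p 1 < 5} = 0 := by
        rw [hval, hxI2, hyI5, inf_eq_left.2 (show (0 : ℤ ×ₗ ℝ) ≤ toLex ((0:ℤ), (4:ℝ)) from
          PF.lex_le_iff.2 (Or.inr ⟨rfl, by norm_num⟩))]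
      have hSmeas : ∀ s t : ℝ, MeasurableSet {p : Fin 2 → ℝ | p 0 < s ∧ p 1 < t} := by
        intro s t
        have he : {p : Fin 2 → ℝ | p 0 < s ∧ p 1 < t}
            = (fun p : Fin 2 → ℝ => p 0) ⁻¹' Set.Iio s
              ∩ (fun p : Fin 2 → ℝ => p 1) ⁻¹' Set.Iio t := rfl
        rw [he]
        exact (measurable_pi_apply 0 measurableSet_Iio).inter
          (measurable_pi_apply 1 measurableSet_Iio)
      set A' : Set (Fin 2 → ℝ) := {p | p 0 < 2 ∧ p 1 < 6} with hA'
      set B' : Set (Fin 2 → ℝ) := {p | p 0 < 3 ∧ p 1 < 5} with hB'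
      set U' : Set (Fin 2 → ℝ) := {p | p 0 < 3 ∧ p 1 < 6} with hU'
      have measA : MeasurableSet A' := hSmeas 2 6
      have measB : MeasurableSet B' := hSmeas 3 5
      have measU : MeasurableSet U' := hSmeas 3 6
      have hABi : A' ∩ B' = {p : Fin 2 → ℝ | p 0 < 2 ∧ p 1 < 5} := by
        ext p
        simp only [hA', hB', Set.mem_inter_iff, Set.mem_setOf_eq]
        constructor
        · rintro ⟨⟨h1, _⟩, ⟨_, h4⟩⟩
          exact ⟨h1, h4⟩
        · rintro ⟨h1, h2⟩
          exact ⟨⟨h1, by linarith⟩, ⟨by linarith, h2⟩⟩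
      have hd1 := PF.obs_diff hz (measA.inter measB) measB Set.inter_subset_right
      rw [Set.diff_inter_self_eq_diff, hABi, hz25, hz35] at hd1
      -- hd1 : z (B' \ A') = toLex (0,3) - 0
      have hu1 := hz.2.2.1 A' (B' \ A') measA (measB.diff measA) disjoint_sdiff_self_right
      rw [Set.union_diff_self, hz26, hd1] at hu1
      have hsubU : A' ∪ B' ⊆ U' := by
        rintro p (⟨h1, h2⟩ | ⟨h1, h2⟩) <;> exact ⟨by linarith, by linarith⟩
      have hdR := PF.obs_diff hz (measA.union measB) measU hsubU
      rw [hu1, hz36] at hdR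
      have hzR : z (U' \ (A' ∪ B')) = 0 := by rw [hdR]; abel
      set T : Set (Fin 2 → ℝ) := {p | p 0 ∈ ({(2:ℝ)} : Set ℝ) ∧ p 1 ∈ ({(5:ℝ)} : Set ℝ)}
        with hT
      have hTmeas : MeasurableSet T := by
        have he : T = (fun p : Fin 2 → ℝ => p 0) ⁻¹' {(2:ℝ)}
            ∩ (fun p : Fin 2 → ℝ => p 1) ⁻¹' {(5:ℝ)} := rfl
        rw [he]
        exact (measurable_pi_apply 0 (measurableSet_singleton _)).inter
          (measurable_pi_apply 1 (measurableSet_singleton _))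
      have hTsub : T ⊆ U' \ (A' ∪ B') := by
        rintro p ⟨hp0, hp1⟩
        rw [Set.mem_singleton_iff] at hp0 hp1
        constructor
        · exact ⟨by rw [hp0]; norm_num, by rw [hp1]; norm_num⟩
        · rintro (⟨h1, _⟩ | ⟨_, h2⟩)
          · rw [hp0] at h1; norm_num at h1
          · rw [hp1] at h2; norm_num at h2
      have hzT : z T = 0 := by
        refine le_antisymm ?_ (PF.obs_nonneg hz hTmeas)
        rw [← hzR]
        exact PF.obs_mono hz hTmeas (measU.diff (measA.union measB)) hTsub
      refine ⟨{(2:ℝ)}, {(5:ℝ)}, measurableSet_singleton _, measurableSet_singleton _,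
        toLex (0, 3), ?_, ?_⟩
      · have h1 : PF.dObs 2 3 3 {(2:ℝ)} = toLex ((0:ℤ), (3:ℝ)) := by
          unfold PF.dObs
          rw [if_pos (by norm_num), if_neg (by norm_num), add_zero]
        have h2 : PF.dObs 1 5 4 {(5:ℝ)} = toLex ((1:ℤ), (-4:ℝ)) := by
          unfold PF.dObs
          rw [if_neg (by norm_num), if_pos (by norm_num), zero_add]
        rw [h1, h2]
        have hg := isGLB_pair (γ := ℤ ×ₗ ℝ) (a := toLex ((0:ℤ), (3:ℝ)))
          (b := toLex ((1:ℤ), (-4:ℝ)))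
        rwa [inf_eq_left.2 (PF.lex_le_iff.2 (Or.inl (by simp)))] at hg
      · rw [hzT]
        exact PF.lex_lt_iff.2 (Or.inr ⟨by simp, by norm_num⟩)
end

section
/- Let L be a linearly ordered abelian group and let F₁,…,Fₙ : ℝ → L (n ≥ 2) be functions each satisfying the one-dimensional volume condition, i.e. each Fᵢ is nondecreasing. Define F(s₁,…,sₙ) = min{F₁(s₁),…,Fₙ(sₙ)}. Then F satisfies the n-dimensional volume condition: Δ₁(a₁,b₁)⋯Δₙ(aₙ,bₙ)F ≥ 0 for all reals aᵢ ≤ bᵢ. Moreover, given A = [a₁,b₁) × ⋯ × [aₙ,bₙ), if F₁(a₁) ≤ F₂(a₂) ≤ ⋯ ≤ Fₙ(aₙ), then Δ₁(a₁,b₁)⋯Δₙ(aₙ,bₙ)F = min_{1≤i≤n−1} (min{Fᵢ(bᵢ), Fₙ(bₙ)}) − min_{1≤i≤n−1} (min{Fᵢ(bᵢ), Fₙ(aₙ)}). -/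
open Classical

section Statement19Aux

open Finset Paper

variable {L : Type*} [AddCommGroup L] [LinearOrder L] [IsOrderedAddMonoid L]

private lemma gclamp_mono {m M : L} (h : m ≤ M) :
    Monotone (fun c : L => c ⊓ M - c ⊓ m) := by
  intro c c' hcc'
  rcases le_total c m with h1 | h1
  · have h2 : c ⊓ M - c ⊓ m = 0 := by
      rw [inf_eq_left.2 (h1.trans h), inf_eq_left.2 h1, sub_self]
    simp only [h2]
    exact sub_nonneg.2 (inf_le_inf_left c' h)
  · have hm : c ⊓ m = m := inf_eq_right.2 h1
    have hm' : c' ⊓ m = m := inf_eq_right.2 (h1.trans hcc')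
    simp only [hm, hm']
    exact sub_le_sub_right (inf_le_inf_right M hcc') m

private def volSumB {Mo : Type*} [AddCommGroup Mo] {ι : Type*} [Fintype ι] [DecidableEq ι]
    (F : (ι → ℝ) → Mo) (a b : ι → ℝ) : Mo :=
  ∑ δ : ι → Bool, (∏ i, (if δ i then (1 : ℤ) else -1)) •
    F (fun i => if δ i then b i else a i)

private lemma sign_eq {ι : Type*} [Fintype ι] [DecidableEq ι] (S : Finset ι) :
    (∏ i, (if i ∈ S then (1 : ℤ) else -1)) = (-1) ^ (Fintype.card ι - S.card) := by
  rw [Finset.prod_ite, Finset.prod_const_one, one_mul, Finset.prod_const]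
  congr 1
  have h1 := Finset.card_filter_add_card_filter_not
    (s := (univ : Finset ι)) (p := fun i => i ∈ S)
  have h2 : (univ.filter (fun i => i ∈ S)).card = S.card := by
    congr 1; ext i; simp
  rw [Finset.card_univ] at h1
  omega

private lemma volSum_eq_volSumB {Mo : Type*} [AddCommGroup Mo] {ι : Type*} [Fintype ι]
    [DecidableEq ι] (F : (ι → ℝ) → Mo) (a b : ι → ℝ) :
    volSum F a b = volSumB F a b := by
  rw [volSum, volSumB]
  refine Fintype.sum_equiv ⟨fun S : Finset ι => fun i => decide (i ∈ S),
      fun δ => univ.filter (fun i => δ i = true),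
      fun S => by ext i; simp, fun δ => by funext i; simp⟩ _ _ fun S => ?_
  simp only [Equiv.coe_fn_mk, decide_eq_true_eq]
  rw [sign_eq]

private lemma volSumB_peel {Mo : Type*} [AddCommGroup Mo] {k : ℕ}
    (F : (Fin (k + 1) → ℝ) → Mo) (F' : (Fin k → ℝ) → Mo) (a b : Fin (k + 1) → ℝ)
    (h : ∀ s : Fin k → ℝ, F (Fin.cons (b 0) s) - F (Fin.cons (a 0) s) = F' s) :
    volSumB F a b = volSumB F' (fun i => a i.succ) (fun i => b i.succ) := by
  rw [volSumB, ← Equiv.sum_comp (Fin.consEquiv (fun _ : Fin (k + 1) => Bool)),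
    Fintype.sum_prod_type, Fintype.sum_bool, ← Finset.sum_add_distrib]
  refine Finset.sum_congr rfl fun δ _ => ?_
  have hc : ∀ x : Bool,
      (fun i => if (Fin.consEquiv (fun _ : Fin (k + 1) => Bool)) (x, δ) i then b i else a i)
        = Fin.cons (if x then b 0 else a 0)
            (fun j : Fin k => if δ j then b j.succ else a j.succ) := by
    intro x; funext i
    refine Fin.cases ?_ (fun j => ?_) i <;> simp [Fin.consEquiv]
  have hs : ∀ x : Bool,
      (∏ i, (if (Fin.consEquiv (fun _ : Fin (k + 1) => Bool)) (x, δ) i then (1 : ℤ) else -1))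
        = (if x then (1 : ℤ) else -1) * ∏ j, (if δ j then (1 : ℤ) else -1) := by
    intro x; rw [Fin.prod_univ_succ]; simp [Fin.consEquiv]
  have e1 : (if (true : Bool) then (1 : ℤ) else -1) = 1 := rfl
  have e2 : (if (false : Bool) then (1 : ℤ) else -1) = -1 := rfl
  rw [hc, hc, hs, hs, ← h (fun j : Fin k => if δ j then b j.succ else a j.succ), e1, e2,
    one_mul, neg_one_mul, neg_smul, smul_sub, sub_eq_add_neg]
  simp

private lemma volSumB_one {Mo : Type*} [AddCommGroup Mo] (F : (Fin 1 → ℝ) → Mo)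
    (a b : Fin 1 → ℝ) : volSumB F a b = F b - F a := by
  rw [volSumB, ← Equiv.sum_comp (Equiv.funUnique (Fin 1) Bool).symm, Fintype.sum_bool]
  simp [sub_eq_add_neg]

end Statement19Aux

section Statement19Aux2

open Finset Paper

variable {L : Type*} [AddCommGroup L] [LinearOrder L] [IsOrderedAddMonoid L]

private lemma inf'_univ_succ {k : ℕ} (f : Fin (k + 2) → L) :
    univ.inf' univ_nonempty f =
      f 0 ⊓ univ.inf' univ_nonempty (fun i : Fin (k + 1) => f i.succ) := by
  refine le_antisymm (le_inf (inf'_le _ (mem_univ 0))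
    (le_inf' _ _ fun i _ => inf'_le _ (mem_univ _))) (le_inf' _ _ fun j _ => ?_)
  refine Fin.cases ?_ (fun i => ?_) j
  · exact inf_le_left
  · exact inf_le_right.trans (inf'_le _ (mem_univ i))

private lemma inf'_univ_one (f : Fin 1 → L) : univ.inf' univ_nonempty f = f 0 := by
  refine le_antisymm (inf'_le _ (mem_univ 0)) (le_inf' _ _ fun i _ => ?_)
  fin_cases i; exact le_rfl

private lemma map_inf' {k : ℕ} (g : L → L) (hg : Monotone g) (f : Fin (k + 1) → L) :
    g (univ.inf' univ_nonempty f) = univ.inf' univ_nonempty (fun i => g (f i)) :=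
  Finset.apply_inf'_eq_inf'_comp _ g fun x y => hg.map_min

private lemma cons_inf'_sub {k : ℕ} {m M : L} (h : m ≤ M) (f : Fin (k + 1) → L) :
    univ.inf' univ_nonempty (Fin.cons M f : Fin (k + 2) → L) -
      univ.inf' univ_nonempty (Fin.cons m f : Fin (k + 2) → L) =
      univ.inf' univ_nonempty (fun i => f i ⊓ M - f i ⊓ m) := by
  rw [inf'_univ_succ, inf'_univ_succ]
  simp only [Fin.cons_zero, Fin.cons_succ]
  rw [inf_comm M, inf_comm m]
  exact map_inf' _ (gclamp_mono h) f

private lemma peel_step {k : ℕ} (Fi : Fin (k + 2) → ℝ → L) (hFi : ∀ i, Monotone (Fi i))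
    (a b : Fin (k + 2) → ℝ) (hab : ∀ i, a i ≤ b i) :
    volSum (fun s : Fin (k + 2) → ℝ => univ.inf' univ_nonempty fun i => Fi i (s i)) a b =
      volSum (fun s : Fin (k + 1) → ℝ => univ.inf' univ_nonempty fun i =>
          Fi i.succ (s i) ⊓ Fi 0 (b 0) - Fi i.succ (s i) ⊓ Fi 0 (a 0))
        (fun i => a i.succ) (fun i => b i.succ) := by
  rw [volSum_eq_volSumB, volSum_eq_volSumB]
  refine volSumB_peel _ _ a b fun s => ?_
  have e1 : (fun i => Fi i ((Fin.cons (b 0) s : Fin (k + 2) → ℝ) i)) =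
      Fin.cons (Fi 0 (b 0)) (fun i : Fin (k + 1) => Fi i.succ (s i)) := by
    funext i; refine Fin.cases ?_ (fun j => ?_) i <;> simp
  have e2 : (fun i => Fi i ((Fin.cons (a 0) s : Fin (k + 2) → ℝ) i)) =
      Fin.cons (Fi 0 (a 0)) (fun i : Fin (k + 1) => Fi i.succ (s i)) := by
    funext i; refine Fin.cases ?_ (fun j => ?_) i <;> simp
  show univ.inf' univ_nonempty (fun i => Fi i ((Fin.cons (b 0) s : Fin (k + 2) → ℝ) i)) -
      univ.inf' univ_nonempty (fun i => Fi i ((Fin.cons (a 0) s : Fin (k + 2) → ℝ) i)) = _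
  rw [e1, e2]
  exact cons_inf'_sub (hFi 0 (hab 0)) _

end Statement19Aux2

section Statement19Aux3

open Finset Paper

variable {L : Type*} [AddCommGroup L] [LinearOrder L] [IsOrderedAddMonoid L]

private lemma volSum_min_formula :
    ∀ (n : ℕ) (Fi : Fin (n + 2) → ℝ → L), (∀ i, Monotone (Fi i)) →
      ∀ a b : Fin (n + 2) → ℝ, (∀ i, a i ≤ b i) →
      (∀ i j : Fin (n + 2), i ≤ j → Fi i (a i) ≤ Fi j (a j)) →
      volSum (fun s : Fin (n + 2) → ℝ =>
          univ.inf' univ_nonempty fun i => Fi i (s i)) a b =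
        (univ.inf' univ_nonempty fun i : Fin (n + 1) =>
          Fi i.castSucc (b i.castSucc) ⊓ Fi (Fin.last (n + 1)) (b (Fin.last (n + 1)))) -
        (univ.inf' univ_nonempty fun i : Fin (n + 1) =>
          Fi i.castSucc (b i.castSucc) ⊓ Fi (Fin.last (n + 1)) (a (Fin.last (n + 1)))) := by
  intro n
  induction n with
  | zero =>
    intro Fi hFi a b hab hord
    rw [peel_step Fi hFi a b hab, volSum_eq_volSumB, volSumB_one,
      inf'_univ_one, inf'_univ_one, inf'_univ_one, inf'_univ_one]
    have hl : Fin.last 1 = (1 : Fin 2) := rfl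
    simp only [Fin.succ_zero_eq_one, Fin.castSucc_zero, hl]
    have h01 : Fi 0 (a 0) ≤ Fi 1 (a 1) := hord 0 1 (by decide)
    have hA : Fi 1 (b 1) ⊓ Fi 0 (a 0) = Fi 0 (a 0) :=
      inf_eq_right.2 (h01.trans (hFi 1 (hab 1)))
    have hB : Fi 1 (a 1) ⊓ Fi 0 (a 0) = Fi 0 (a 0) := inf_eq_right.2 h01
    rw [hA, hB, sub_sub_sub_cancel_right, inf_comm (Fi 1 (b 1)) (Fi 0 (b 0)),
      inf_comm (Fi 1 (a 1)) (Fi 0 (b 0))]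
  | succ n ih =>
    intro Fi hFi a b hab hord
    set m0 : L := Fi 0 (a 0) with hm0def
    set M0 : L := Fi 0 (b 0) with hM0def
    have h0 : m0 ≤ M0 := hFi 0 (hab 0)
    rw [peel_step Fi hFi a b hab]
    rw [ih (fun i t => Fi i.succ t ⊓ M0 - Fi i.succ t ⊓ m0)
      (fun i => (gclamp_mono h0).comp (hFi i.succ)) (fun i => a i.succ) (fun i => b i.succ)
      (fun i => hab i.succ)
      (fun i j hij => gclamp_mono h0 (hord i.succ j.succ (Fin.succ_le_succ_iff.2 hij)))]
    have hm0b : ∀ j : Fin (n + 2), Fi j.succ (b j.succ) ⊓ m0 = m0 := fun j =>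
      inf_eq_right.2 ((hord 0 j.succ (Fin.zero_le _)).trans (hFi j.succ (hab j.succ)))
    have hm0a : ∀ j : Fin (n + 2), Fi j.succ (a j.succ) ⊓ m0 = m0 := fun j =>
      inf_eq_right.2 (hord 0 j.succ (Fin.zero_le _))
    simp only [hm0b, hm0a]
    -- now remove the `- m0` and combine the minima
    have hsub : ∀ f : Fin (n + 1) → L,
        univ.inf' univ_nonempty (fun i => f i - m0) = univ.inf' univ_nonempty f - m0 :=
      fun f => (map_inf' (fun c => c - m0) (fun x y h => sub_le_sub_right h m0) f).symm
    have hmin : ∀ x y : L, (x ⊓ M0 - m0) ⊓ (y ⊓ M0 - m0) = x ⊓ y ⊓ M0 - m0 := by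
      intro x y
      rw [min_sub_sub_right, min_min_min_comm, min_self]
    simp only [hmin]
    rw [hsub, hsub, sub_sub_sub_cancel_right]
    -- pull the constant M0 out of the infima
    have hconst : ∀ (f : Fin (n + 1) → L) (c : L),
        univ.inf' univ_nonempty (fun i => f i ⊓ c) = univ.inf' univ_nonempty f ⊓ c :=
      fun f c => (Finset.apply_inf'_eq_inf'_comp _ (fun x => x ⊓ c)
        (fun x y => inf_inf_distrib_right x y c)).symm
    simp only [Fin.succ_last]
    rw [hconst (fun i : Fin (n+1) => Fi i.castSucc.succ (b i.castSucc.succ) ⊓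
        Fi (Fin.last (n+2)) (b (Fin.last (n+2)))) M0,
      hconst (fun i : Fin (n+1) => Fi i.castSucc.succ (b i.castSucc.succ) ⊓
        Fi (Fin.last (n+2)) (a (Fin.last (n+2)))) M0]
    -- decompose the RHS infima over `Fin (n+2)`
    rw [inf'_univ_succ (fun j : Fin (n+2) => Fi j.castSucc (b j.castSucc) ⊓
        Fi (Fin.last (n+2)) (b (Fin.last (n+2)))),
      inf'_univ_succ (fun j : Fin (n+2) => Fi j.castSucc (b j.castSucc) ⊓
        Fi (Fin.last (n+2)) (a (Fin.last (n+2))))]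
    simp only [Fin.castSucc_zero, Fin.succ_castSucc]
    congr 1
    · -- b-side
      set W : L := Fi (Fin.last (n+2)) (b (Fin.last (n+2)))
      set Z : L := univ.inf' univ_nonempty
        (fun i : Fin (n+1) => Fi i.succ.castSucc (b i.succ.castSucc) ⊓ W) with hZ
      have hZW : Z ≤ W := (inf'_le _ (mem_univ 0)).trans inf_le_right
      rw [inf_comm Z M0, inf_assoc, inf_eq_right.2 hZW]
    · -- a-side
      set W : L := Fi (Fin.last (n+2)) (a (Fin.last (n+2)))
      set Z : L := univ.inf' univ_nonempty
        (fun i : Fin (n+1) => Fi i.succ.castSucc (b i.succ.castSucc) ⊓ W) with hZ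
      have hZW : Z ≤ W := (inf'_le _ (mem_univ 0)).trans inf_le_right
      rw [inf_comm Z M0, inf_assoc, inf_eq_right.2 hZW]

end Statement19Aux3

section Statement19Aux4

open Finset Paper

variable {L : Type*} [AddCommGroup L] [LinearOrder L] [IsOrderedAddMonoid L]

private lemma volSum_min_perm {k : ℕ} (Fi : Fin (k + 1) → ℝ → L) (a b : Fin (k + 1) → ℝ)
    (σ : Equiv.Perm (Fin (k + 1))) :
    volSum (fun s : Fin (k + 1) → ℝ =>
        univ.inf' univ_nonempty fun i => Fi (σ i) (s i))
      (fun i => a (σ i)) (fun i => b (σ i)) =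
    volSum (fun s : Fin (k + 1) → ℝ =>
        univ.inf' univ_nonempty fun i => Fi i (s i)) a b := by
  rw [volSum_eq_volSumB, volSum_eq_volSumB, volSumB, volSumB]
  refine Fintype.sum_equiv (Equiv.arrowCongr σ (Equiv.refl Bool)) _ _ fun δ => ?_
  simp only [Equiv.arrowCongr_apply, Equiv.coe_refl, Function.comp_apply,
    Function.comp_def, id_eq]
  congr 1
  · exact Fintype.prod_equiv σ _ _ fun i => by simp
  · refine le_antisymm (le_inf' _ _ fun j _ => ?_) (le_inf' _ _ fun i _ => ?_)
    · simpa [-Finset.inf'_le_iff] using inf'_le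
        (fun i => Fi (σ i) ((fun i => if δ i then b (σ i) else a (σ i)) i)) (mem_univ (σ.symm j))
    · simpa [-Finset.inf'_le_iff] using inf'_le
        (fun j => Fi j (if δ (σ.symm j) then b j else a j)) (mem_univ (σ i))

end Statement19Aux4


open Paper in
/-- Claim in Theorem 5.2: if `F₁,…,Fₙ : ℝ → L` (`n ≥ 2`, `L` a linearly
ordered abelian group) are nondecreasing, then `F(s̄) = min_i Fᵢ(sᵢ)` satisfies the
`n`-dimensional volume condition; moreover if `F₁(a₁) ≤ ⋯ ≤ Fₙ(aₙ)` then the volume of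
`[a₁,b₁) × ⋯ × [aₙ,bₙ)` equals
`min_{i<n}(Fᵢ(bᵢ) ⊓ Fₙ(bₙ)) − min_{i<n}(Fᵢ(bᵢ) ⊓ Fₙ(aₙ))`. -/
theorem statement_19 {L : Type*} [AddCommGroup L] [LinearOrder L] [IsOrderedAddMonoid L]
    (n : ℕ) (Fi : Fin (n + 2) → ℝ → L) (hFi : ∀ i, Monotone (Fi i)) :
    (∀ a b : Fin (n + 2) → ℝ, (∀ i, a i ≤ b i) →
      0 ≤ volSum (fun s : Fin (n + 2) → ℝ =>
        Finset.univ.inf' Finset.univ_nonempty fun i => Fi i (s i)) a b) ∧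
    (∀ a b : Fin (n + 2) → ℝ, (∀ i, a i ≤ b i) →
      (∀ i j : Fin (n + 2), i ≤ j → Fi i (a i) ≤ Fi j (a j)) →
      volSum (fun s : Fin (n + 2) → ℝ =>
          Finset.univ.inf' Finset.univ_nonempty fun i => Fi i (s i)) a b =
        (Finset.univ.inf' Finset.univ_nonempty fun i : Fin (n + 1) =>
          Fi i.castSucc (b i.castSucc) ⊓ Fi (Fin.last (n + 1)) (b (Fin.last (n + 1)))) -
        (Finset.univ.inf' Finset.univ_nonempty fun i : Fin (n + 1) =>
          Fi i.castSucc (b i.castSucc) ⊓ Fi (Fin.last (n + 1)) (a (Fin.last (n + 1))))) := by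
  constructor
  · intro a b hab
    set σ := Tuple.sort (fun i => Fi i (a i)) with hσ
    have hform := volSum_min_formula n (fun i => Fi (σ i)) (fun i => hFi (σ i))
      (fun i => a (σ i)) (fun i => b (σ i)) (fun i => hab (σ i))
      (fun i j hij => Tuple.monotone_sort (fun i => Fi i (a i)) hij)
    rw [← volSum_min_perm Fi a b σ, hform]
    refine sub_nonneg.2 (Finset.le_inf' _ _ fun i _ => ?_)
    exact (Finset.inf'_le _ (Finset.mem_univ i)).trans (inf_le_inf_left _ (hFi _ (hab _)))
  · intro a b hab hord
    exact volSum_min_formula n Fi hFi a b hab hord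
end
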